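/- Suppose β ∈ (0,1), N ≥ 1, ε ≥ 0, t ∈ ℕ, and F_i ∈ [0,1] for i = 1,…,t satisfy N·∏_{i=1}^{t}(1 - (1-β)F_i) ≥ β^ε with each factor positive. Then the expected number of mistakes M = ∑_{i=1}^{t} F_i satisfies M ≤ (log N + ε·log(1/β))/(1-β). -/

import Mathlib

/-- Mistake bound: from `N * ∏ (1-(1-β)F i) ≥ β^ε` (all factors positive) one gets
`M = ∑ F i ≤ (log N + ε log(1/β)) / (1-β)`. -/
theorem pwmv_mistake_bound (β N ε : ℝ) (hβ : β ∈ Set.Ioo (0 : ℝ) 1)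
    (hN : 1 ≤ N) (hε : 0 ≤ ε) (t : ℕ) (F : ℕ → ℝ)
    (hF : ∀ i ∈ Finset.range t, F i ∈ Set.Icc (0 : ℝ) 1)
    (hpos : ∀ i ∈ Finset.range t, 0 < 1 - (1 - β) * F i)
    (hweights : β ^ ε ≤ N * ∏ i ∈ Finset.range t, (1 - (1 - β) * F i)) :
    (∑ i ∈ Finset.range t, F i) ≤ (Real.log N + ε * Real.log (1 / β)) / (1 - β) := by
  obtain ⟨hβ0, hβ1⟩ := hβ
  have h1β : 0 < 1 - β := by linarith
  have hprodpos : 0 < ∏ i ∈ Finset.range t, (1 - (1 - β) * F i) :=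
    Finset.prod_pos hpos
  have hlog : ε * Real.log β ≤ Real.log N + ∑ i ∈ Finset.range t, Real.log (1 - (1 - β) * F i) := by
    have := Real.log_le_log (Real.rpow_pos_of_pos hβ0 ε) hweights
    rwa [Real.log_rpow hβ0, Real.log_mul (by linarith) hprodpos.ne',
      Real.log_prod (fun i hi => (hpos i hi).ne')] at this
  have hsum : ∑ i ∈ Finset.range t, Real.log (1 - (1 - β) * F i) ≤
      ∑ i ∈ Finset.range t, (-(1 - β) * F i) := by
    apply Finset.sum_le_sum
    intro i hi
    have := Real.log_le_sub_one_of_pos (hpos i hi)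
    linarith
  have hsum2 : ∑ i ∈ Finset.range t, (-(1 - β) * F i)
      = -(1 - β) * ∑ i ∈ Finset.range t, F i := by
    rw [Finset.mul_sum]
  
  rw [le_div_iff₀ h1β]
  have hlogβ : Real.log (1 / β) = -Real.log β := by
    rw [one_div, Real.log_inv]
  nlinarith [hlog, hsum, hsum2]
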